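/- For q ∈ (0, 1/2), let ρ_q be the 2×2 density matrix [[1−q, √(q(1−q))],[√(q(1−q)), q]] with pinching Πρ_q = diag(1−q, q). Then D(ρ_q‖Πρ_q) / (q(1−q) · log((1−q)/q)) tends to 1 as q → 0⁺. -/

import Mathlib

open Matrix MeasureTheory
open scoped ComplexOrder

noncomputable section

/-- Matrix logarithm of a Hermitian matrix via functional calculus on its eigenvalues,
with the convention `log 0 = 0` (since `Real.log 0 = 0`); junk value `0` on
non-Hermitian matrices. -/
def mlog {m : Type*} [Fintype m] [DecidableEq m] (M : Matrix m m ℂ) : Matrix m m ℂ :=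
  open scoped Classical in
  if h : M.IsHermitian then
    (h.eigenvectorUnitary : Matrix m m ℂ) *
      Matrix.diagonal (fun i => (Real.log (h.eigenvalues i) : ℂ)) *
      (h.eigenvectorUnitary : Matrix m m ℂ)ᴴ
  else 0

/-- Umegaki quantum relative entropy `D(ρ‖σ) = Tr[ρ (log ρ − log σ)]`. -/
def relEnt {m : Type*} [Fintype m] [DecidableEq m] (ρ σ : Matrix m m ℂ) : ℝ :=
  ((ρ * (mlog ρ - mlog σ)).trace).re
/-- The pure-state family `ρ_q = [[1−q, √(q(1−q))],[√(q(1−q)), q]]`. -/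
def rhoq (q : ℝ) : Matrix (Fin 2) (Fin 2) ℂ :=
  !![((1 - q : ℝ) : ℂ), ((Real.sqrt (q * (1 - q)) : ℝ) : ℂ);
     ((Real.sqrt (q * (1 - q)) : ℝ) : ℂ), ((q : ℝ) : ℂ)]

/-- Its pinching `Πρ_q = diag(1−q, q)`. -/
def pinchq (q : ℝ) : Matrix (Fin 2) (Fin 2) ℂ :=
  Matrix.diagonal ![((1 - q : ℝ) : ℂ), ((q : ℝ) : ℂ)]


open Filter Set in
lemma rhoq_herm (q : ℝ) : (rhoq q).IsHermitian := by
  ext i j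
  fin_cases i <;> fin_cases j <;> simp [rhoq, Matrix.conjTranspose_apply]

lemma rhoq_sq {q : ℝ} (h0 : 0 ≤ q) (h1 : q ≤ 1) : rhoq q * rhoq q = rhoq q := by
  have h3 : ((Real.sqrt (q * (1 - q)) : ℂ)) ^ 2 = (q : ℂ) - (q : ℂ) ^ 2 := by
    have : Real.sqrt (q * (1 - q)) ^ 2 = q - q ^ 2 := by
      rw [Real.sq_sqrt (by nlinarith)]; ring
    exact_mod_cast congrArg (Complex.ofReal) this
  ext i j
  fin_cases i <;> fin_cases j <;>
    simp [rhoq, Matrix.mul_apply, Fin.sum_univ_two] <;>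
    push_cast <;>
    first
    | linear_combination h3
    | linear_combination (0:ℂ)

lemma eig_idem {n : Type*} [Fintype n] [DecidableEq n] {A : Matrix n n ℂ}
    (hA : A.IsHermitian) (hidem : A * A = A) (i : n) :
    hA.eigenvalues i = 0 ∨ hA.eigenvalues i = 1 := by
  set v := ⇑(hA.eigenvectorBasis i) with hv
  have hvne : v ≠ 0 := by
    have := hA.eigenvectorBasis.orthonormal.ne_zero i
    intro h; apply this; ext j; exact congrFun h j
  have h1 : A *ᵥ v = hA.eigenvalues i • v := hA.mulVec_eigenvectorBasis i
  have h2 : (A * A) *ᵥ v = (hA.eigenvalues i * hA.eigenvalues i) • v := by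
    rw [← Matrix.mulVec_mulVec, h1, Matrix.mulVec_smul, h1, smul_smul]
  rw [hidem, h1] at h2
  have h3 : (hA.eigenvalues i - hA.eigenvalues i * hA.eigenvalues i) • v = 0 := by
    rw [sub_smul, h2, sub_self]
  rcases smul_eq_zero.mp h3 with h | h
  · have h4 : hA.eigenvalues i * hA.eigenvalues i = hA.eigenvalues i :=
      (sub_eq_zero.mp h).symm
    have h5 : hA.eigenvalues i * (hA.eigenvalues i - 1) = 0 := by ring_nf; linarith
    rcases mul_eq_zero.mp h5 with h6 | h6
    · exact Or.inl h6
    · exact Or.inr (by linarith [sub_eq_zero.mp h6])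
  · exact absurd h hvne

lemma mlog_eq_zero {m : Type*} [Fintype m] [DecidableEq m] {M : Matrix m m ℂ}
    (h : M.IsHermitian) (hl : ∀ i, Real.log (h.eigenvalues i) = 0) : mlog M = 0 := by
  rw [mlog, dif_pos h]
  have : (Matrix.diagonal (fun i => (Real.log (h.eigenvalues i) : ℂ))) = 0 := by
    have : (fun i => (Real.log (h.eigenvalues i) : ℂ)) = fun _ => 0 := by
      funext i; rw [hl i]; simp
    rw [this, Matrix.diagonal_zero]
  rw [this, mul_zero, zero_mul]

lemma mlog_affine {m : Type*} [Fintype m] [DecidableEq m] {M : Matrix m m ℂ}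
    (h : M.IsHermitian) (a b : ℝ)
    (hl : ∀ i, Real.log (h.eigenvalues i) = a * h.eigenvalues i + b) :
    mlog M = (a : ℂ) • M + (b : ℂ) • 1 := by
  rw [mlog, dif_pos h]
  have hdiag : (Matrix.diagonal (fun i => (Real.log (h.eigenvalues i) : ℂ)))
      = (a : ℂ) • Matrix.diagonal (RCLike.ofReal ∘ h.eigenvalues) + (b : ℂ) • 1 := by
    ext i j
    by_cases hij : i = j
    · subst hij
      simp [Matrix.diagonal_apply_eq, Matrix.one_apply_eq, hl i]
    · simp [Matrix.diagonal_apply_ne _ hij, Matrix.one_apply_ne hij]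
  rw [hdiag]
  have hU : (h.eigenvectorUnitary : Matrix m m ℂ) * (h.eigenvectorUnitary : Matrix m m ℂ)ᴴ
      = 1 := by
    rw [← Matrix.star_eq_conjTranspose]
    exact (Matrix.mem_unitaryGroup_iff).mp h.eigenvectorUnitary.2
  rw [mul_add, add_mul, Matrix.mul_smul, Matrix.smul_mul, Matrix.mul_smul, Matrix.smul_mul,
    mul_one, hU]
  congr 1
  congr 1
  conv_rhs => rw [h.spectral_theorem]
  rw [Unitary.conjStarAlgAut_apply, Matrix.star_eq_conjTranspose]

lemma mlog_rhoq {q : ℝ} (h0 : 0 ≤ q) (h1 : q ≤ 1) : mlog (rhoq q) = 0 := by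
  apply mlog_eq_zero (rhoq_herm q)
  intro i
  rcases eig_idem (rhoq_herm q) (rhoq_sq h0 h1) i with h | h <;> rw [h] <;> simp

lemma pinchq_herm (q : ℝ) : (pinchq q).IsHermitian := by
  ext i j
  fin_cases i <;> fin_cases j <;>
    simp [pinchq, Matrix.conjTranspose_apply, Matrix.diagonal]

lemma eig_pinch {q : ℝ} (i : Fin 2) :
    (pinchq_herm q).eigenvalues i = 1 - q ∨ (pinchq_herm q).eigenvalues i = q := by
  set hH := pinchq_herm q
  set lam := hH.eigenvalues i with hlam
  set v := ⇑(hH.eigenvectorBasis i) with hv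
  have hvne : v ≠ 0 := by
    have := hH.eigenvectorBasis.orthonormal.ne_zero i
    intro h; apply this; ext j; exact congrFun h j
  have h1 : pinchq q *ᵥ v = lam • v := hH.mulVec_eigenvectorBasis i
  obtain ⟨j, hj⟩ := Function.ne_iff.mp hvne
  have h2 : (pinchq q *ᵥ v) j = (![((1 - q : ℝ) : ℂ), ((q : ℝ) : ℂ)]) j * v j := by
    simp [pinchq, Matrix.mulVec_diagonal]
  have h3 : (![((1 - q : ℝ) : ℂ), ((q : ℝ) : ℂ)]) j * v j = (lam : ℂ) * v j := by
    rw [← h2, h1]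
    simp [Pi.smul_apply, Complex.real_smul]
  have h4 : (![((1 - q : ℝ) : ℂ), ((q : ℝ) : ℂ)]) j = (lam : ℂ) :=
    mul_right_cancel₀ hj h3
  fin_cases j
  · left
    have := h4
    simp at this
    exact_mod_cast this.symm
  · right
    have := h4
    simp at this
    exact_mod_cast this.symm

lemma mlog_pinch {q : ℝ} (h0 : 0 < q) (h1 : q < 1/2) :
    mlog (pinchq q) = Matrix.diagonal ![((Real.log (1 - q) : ℝ) : ℂ), ((Real.log q : ℝ) : ℂ)] := by
  have h12 : (1 : ℝ) - 2*q ≠ 0 := by intro h; nlinarith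
  set a : ℝ := (Real.log (1 - q) - Real.log q) / (1 - 2*q) with ha
  set b : ℝ := Real.log q - a * q with hb
  have hq2 : Real.log q = a * q + b := by rw [hb]; ring
  have hq1 : Real.log (1 - q) = a * (1 - q) + b := by
    have := div_mul_cancel₀ (Real.log (1 - q) - Real.log q) h12
    rw [hb]; rw [ha]; nlinarith [this]
  have := mlog_affine (pinchq_herm q) a b (fun i => by
    rcases eig_pinch (q := q) i with h | h <;> rw [h]
    · exact hq1
    · exact hq2)
  rw [this]
  ext i j
  fin_cases i <;> fin_cases j <;>
    simp [pinchq, Matrix.diagonal, Matrix.one_apply, hq1, hq2] <;>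
    push_cast <;>
    ring

lemma relEnt_eq {q : ℝ} (h0 : 0 < q) (h1 : q < 1/2) :
    relEnt (rhoq q) (pinchq q) = -((1 - q) * Real.log (1 - q) + q * Real.log q) := by
  rw [relEnt, mlog_rhoq h0.le (by linarith), mlog_pinch h0 h1]
  rw [zero_sub]
  simp [rhoq, Matrix.trace_fin_two, Matrix.mul_apply, Fin.sum_univ_two,
    Matrix.diagonal_apply, Matrix.vecHead, Matrix.vecTail, Matrix.one_apply,
    Matrix.vecMul_diagonal, Matrix.mul_diagonal]
  push_cast
  ring


open Filter Set in
lemma aux_tendsto :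
    Filter.Tendsto
      (fun q : ℝ =>
        (-((1 - q) * Real.log (1 - q) + q * Real.log q)) / (q * (1 - q) * Real.log ((1 - q) / q)))
      (nhdsWithin 0 (Set.Ioi 0)) (nhds 1) := by
  set A : ℝ → ℝ := fun q => (1 - q) * (Real.log (1 - q) / q) * (Real.log q)⁻¹ with hA_def
  set B : ℝ → ℝ := fun q => Real.log (1 - q) * (Real.log q)⁻¹ with hB_def
  -- limits
  have h1q : Tendsto (fun q : ℝ => 1 - q) (nhdsWithin 0 (Ioi 0)) (nhds 1) := by
    have hc : Continuous (fun q : ℝ => 1 - q) := by continuity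
    have : Tendsto (fun q : ℝ => 1 - q) (nhds 0) (nhds 1) := by
      simpa using hc.tendsto 0
    exact this.mono_left nhdsWithin_le_nhds
  have hlog1q : Tendsto (fun q : ℝ => Real.log (1 - q)) (nhdsWithin 0 (Ioi 0)) (nhds 0) := by
    have hc : Tendsto Real.log (nhds 1) (nhds 0) := by
      have := (Real.continuousAt_log (by norm_num : (1:ℝ) ≠ 0)).tendsto
      simpa using this
    exact hc.comp h1q
  have hinv : Tendsto (fun q : ℝ => (Real.log q)⁻¹) (nhdsWithin 0 (Ioi 0)) (nhds 0) := by
    have h2 : Tendsto (fun q : ℝ => -Real.log q) (nhdsWithin 0 (Ioi 0)) atTop :=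
      tendsto_neg_atBot_atTop.comp Real.tendsto_log_nhdsGT_zero
    have h3 := h2.inv_tendsto_atTop
    have h4 := h3.neg
    simpa [inv_neg] using h4
  have hslope : Tendsto (fun q : ℝ => Real.log (1 - q) / q) (nhdsWithin 0 (Ioi 0)) (nhds (-1)) := by
    have hd : HasDerivAt (fun x : ℝ => Real.log (1 - x)) (-1) 0 := by
      have h1 : HasDerivAt (fun x : ℝ => 1 - x) (-1) 0 := by
        simpa using (hasDerivAt_id (0:ℝ)).const_sub 1
      have := h1.log (by norm_num)
      simpa using this
    have hs := hasDerivAt_iff_tendsto_slope.mp hd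
    have hs' : Tendsto (slope (fun x : ℝ => Real.log (1 - x)) 0) (nhdsWithin 0 (Ioi 0))
        (nhds (-1)) :=
      hs.mono_left (nhdsWithin_mono 0 (fun x hx => ne_of_gt hx))
    refine hs'.congr' ?_
    filter_upwards [self_mem_nhdsWithin] with q hq
    rw [slope_def_field]
    simp
  have hA : Tendsto A (nhdsWithin 0 (Ioi 0)) (nhds 0) := by
    have := (h1q.mul hslope).mul hinv
    simpa using this
  have hB : Tendsto B (nhdsWithin 0 (Ioi 0)) (nhds 0) := by
    have := hlog1q.mul hinv
    simpa using this
  have hG : Tendsto (fun q => (A q + 1) / ((1 - q) * (1 - B q))) (nhdsWithin 0 (Ioi 0))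
      (nhds 1) := by
    have hnum := hA.add (tendsto_const_nhds (x := (1:ℝ)))
    have hden := h1q.mul ((tendsto_const_nhds (x := (1:ℝ))).sub hB)
    have := hnum.div hden (by norm_num)
    simpa [Pi.div_def] using this
  apply hG.congr'
  filter_upwards [Ioo_mem_nhdsGT_of_mem (by norm_num : (0:ℝ) ∈ Ico (0:ℝ) (1/2))] with q hq
  obtain ⟨hq0, hq2⟩ := hq
  have h1q0 : (0:ℝ) < 1 - q := by linarith
  have hlogq_neg : Real.log q < 0 := Real.log_neg hq0 (by linarith)
  have hlogq : Real.log q ≠ 0 := ne_of_lt hlogq_neg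
  have hlogdiff : Real.log q < Real.log (1 - q) := Real.log_lt_log hq0 (by linarith)
  rw [Real.log_div (ne_of_gt h1q0) (ne_of_gt hq0)]
  have hBne : B q ≠ 1 := by
    simp only [hB_def]
    rw [Ne, mul_inv_eq_one₀ hlogq]
    exact hlogdiff.ne'
  have d1ne : (1 - q) * (1 - B q) ≠ 0 :=
    mul_ne_zero (ne_of_gt h1q0) (sub_ne_zero.mpr (Ne.symm hBne))
  have d2ne : q * (1 - q) * (Real.log (1 - q) - Real.log q) ≠ 0 :=
    mul_ne_zero (mul_ne_zero (ne_of_gt hq0) (ne_of_gt h1q0))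
      (sub_ne_zero.mpr hlogdiff.ne')
  rw [div_eq_div_iff d1ne d2ne]
  simp only [hA_def, hB_def]
  field_simp
  ring

/-- Logarithmic sharpness: `D(ρ_q‖Πρ_q) / (q(1−q) log((1−q)/q)) → 1` as `q → 0⁺`. -/
theorem two_level_log_sharpness :
    Filter.Tendsto
      (fun q : ℝ =>
        relEnt (rhoq q) (pinchq q) / (q * (1 - q) * Real.log ((1 - q) / q)))
      (nhdsWithin 0 (Set.Ioi 0)) (nhds 1) := by
  apply aux_tendsto.congr'
  filter_upwards [Ioo_mem_nhdsGT_of_mem (by norm_num : (0:ℝ) ∈ Set.Ico (0:ℝ) (1/2))] with q hq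
  rw [relEnt_eq hq.1 hq.2]
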